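/- Let ρ and f be as above. Then the Hessian of f is bounded uniformly in ε: there exists a constant C (independent of ε > 0) such that ‖D²f(x)‖ ≤ C for all x ∈ ℝ³. -/

import Mathlib

noncomputable def rho (z : ℝ) : ℝ := if z < 1 then z ^ 2 - z ^ 3 / 3 else z - 1 / 3

noncomputable def rho' (z : ℝ) : ℝ := 1 - max (1 - z) 0 ^ 2
noncomputable def rho'' (z : ℝ) : ℝ := 2 * max (1 - z) 0
noncomputable def phi (ε z : ℝ) : ℝ := rho z / (1 + ε * rho z)
noncomputable def phi1 (ε z : ℝ) : ℝ := rho' z / (1 + ε * rho z) ^ 2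
noncomputable def phi2 (ε z : ℝ) : ℝ :=
  rho'' z / (1 + ε * rho z) ^ 2 - 2 * ε * rho' z ^ 2 / (1 + ε * rho z) ^ 3

lemma hasDerivAt_maxsq (t : ℝ) : HasDerivAt (fun s => max s 0 ^ 2) (2 * max t 0) t := by
  rcases lt_trichotomy t 0 with ht | ht | ht
  · have h : (fun s : ℝ => max s 0 ^ 2) =ᶠ[nhds t] fun _ => 0 := by
      filter_upwards [eventually_lt_nhds ht] with s hs
      simp [max_eq_right hs.le]
    rw [max_eq_right ht.le, mul_zero]
    exact (hasDerivAt_const t (0:ℝ)).congr_of_eventuallyEq h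
  · subst ht
    rw [max_self, mul_zero]
    rw [hasDerivAt_iff_isLittleO, Asymptotics.isLittleO_iff]
    intro c hc
    filter_upwards [Metric.eventually_nhds_iff.2 ⟨min c 1, by positivity, fun _ h => h⟩] with s hs
    have hs' : |s| < min c 1 := by simpa [Real.dist_eq] using hs
    have h1 : |s| ≤ 1 := le_of_lt (lt_of_lt_of_le hs' (min_le_right _ _))
    have h2 : |s| ≤ c := le_of_lt (lt_of_lt_of_le hs' (min_le_left _ _))
    have hm : max s 0 ≤ |s| := max_le (le_abs_self s) (abs_nonneg s)
    have hm0 : 0 ≤ max s 0 := le_max_right _ _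
    have key : max s 0 ^ 2 ≤ c * |s| := by nlinarith [abs_nonneg s]
    simpa [Real.norm_eq_abs, abs_of_nonneg (pow_nonneg hm0 2)] using key
  · have h : (fun s : ℝ => max s 0 ^ 2) =ᶠ[nhds t] fun s => s ^ 2 := by
      filter_upwards [eventually_gt_nhds ht] with s hs
      simp [max_eq_left hs.le]
    rw [max_eq_left ht.le]
    have := hasDerivAt_pow 2 t
    simpa [mul_comm] using this.congr_of_eventuallyEq h

lemma hasDerivAt_maxcube (t : ℝ) : HasDerivAt (fun s => max s 0 ^ 3) (3 * max t 0 ^ 2) t := by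
  rcases lt_trichotomy t 0 with ht | ht | ht
  · have h : (fun s : ℝ => max s 0 ^ 3) =ᶠ[nhds t] fun _ => 0 := by
      filter_upwards [eventually_lt_nhds ht] with s hs
      simp [max_eq_right hs.le]
    rw [max_eq_right ht.le]
    simpa using (hasDerivAt_const t (0:ℝ)).congr_of_eventuallyEq h
  · subst ht
    rw [max_self]
    rw [hasDerivAt_iff_isLittleO, Asymptotics.isLittleO_iff]
    intro c hc
    filter_upwards [Metric.eventually_nhds_iff.2 ⟨min c 1, by positivity, fun _ h => h⟩] with s hs
    have hs' : |s| < min c 1 := by simpa [Real.dist_eq] using hs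
    have h1 : |s| ≤ 1 := le_of_lt (lt_of_lt_of_le hs' (min_le_right _ _))
    have h2 : |s| ≤ c := le_of_lt (lt_of_lt_of_le hs' (min_le_left _ _))
    have hm : max s 0 ≤ |s| := max_le (le_abs_self s) (abs_nonneg s)
    have hm0 : 0 ≤ max s 0 := le_max_right _ _
    have k1 : max s 0 ^ 3 ≤ |s| ^ 3 := pow_le_pow_left₀ hm0 hm 3
    have key : max s 0 ^ 3 ≤ c * |s| := by
      nlinarith [abs_nonneg s, mul_nonneg (abs_nonneg s) (abs_nonneg s)]
    simpa [Real.norm_eq_abs, abs_of_nonneg hm0,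
      abs_of_nonneg (pow_nonneg hm0 3)] using key
  · have h : (fun s : ℝ => max s 0 ^ 3) =ᶠ[nhds t] fun s => s ^ 3 := by
      filter_upwards [eventually_gt_nhds ht] with s hs
      simp [max_eq_left hs.le]
    rw [max_eq_left ht.le]
    have := hasDerivAt_pow 3 t
    simpa [mul_comm] using this.congr_of_eventuallyEq h

lemma rho_eq (z : ℝ) : rho z = z - 1/3 + max (1 - z) 0 ^ 3 / 3 := by
  unfold rho
  split_ifs with h
  · rw [max_eq_left (by linarith)]; ring
  · rw [max_eq_right (by linarith)]; ring

lemma hasDerivAt_rho (z : ℝ) : HasDerivAt rho (rho' z) z := by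
  have h1 : HasDerivAt (fun z : ℝ => 1 - z) (-1) z := by
    exact (hasDerivAt_id' z).const_sub 1
  have h2 := (hasDerivAt_maxcube (1 - z)).comp z h1
  have h3 : HasDerivAt (fun z : ℝ => z - 1/3 + max (1 - z) 0 ^ 3 / 3)
      (1 + (3 * max (1 - z) 0 ^ 2 * -1) / 3) z := by
    have h4 : HasDerivAt (fun z : ℝ => z - 1/3) 1 z := by
      exact (hasDerivAt_id' z).sub_const (1/3)
    exact h4.add (h2.div_const 3)
  have : rho = fun z : ℝ => z - 1/3 + max (1 - z) 0 ^ 3 / 3 := funext rho_eq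
  rw [this]
  convert h3 using 1
  unfold rho'; ring

lemma hasDerivAt_rho' (z : ℝ) : HasDerivAt rho' (rho'' z) z := by
  have h1 : HasDerivAt (fun z : ℝ => 1 - z) (-1) z := by
    exact (hasDerivAt_id' z).const_sub 1
  have h2 := (hasDerivAt_maxsq (1 - z)).comp z h1
  have h3 : HasDerivAt (fun z : ℝ => 1 - max (1 - z) 0 ^ 2)
      (0 - 2 * max (1 - z) 0 * -1) z := (hasDerivAt_const z (1:ℝ)).sub h2
  unfold rho' rho''
  convert h3 using 1
  ring

lemma rho_nonneg (z : ℝ) : 0 ≤ rho z := by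
  unfold rho
  split_ifs with h
  · nlinarith [sq_nonneg z]
  · linarith

lemma denom_pos {ε : ℝ} (hε : 0 ≤ ε) (z : ℝ) : 0 < 1 + ε * rho z := by
  nlinarith [rho_nonneg z, mul_nonneg hε (rho_nonneg z)]

lemma hasDerivAt_phi {ε : ℝ} (hε : 0 ≤ ε) (z : ℝ) : HasDerivAt (phi ε) (phi1 ε z) z := by
  have hd := denom_pos hε z
  have h := (hasDerivAt_rho z).div
    ((hasDerivAt_const z (1:ℝ)).add ((hasDerivAt_const z ε).mul (hasDerivAt_rho z))) hd.ne'
  have : phi ε = fun z => rho z / (1 + ε * rho z) := rfl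
  rw [this]
  refine h.congr_deriv ?_
  simp only [Pi.add_apply, Pi.mul_apply]
  unfold phi1
  field_simp
  ring

lemma hasDerivAt_phi1 {ε : ℝ} (hε : 0 ≤ ε) (z : ℝ) : HasDerivAt (phi1 ε) (phi2 ε z) z := by
  have hd := denom_pos hε z
  have hden : HasDerivAt (fun z => (1 + ε * rho z) ^ 2)
      (2 * (1 + ε * rho z) ^ 1 * (0 + ε * rho' z)) z := by
    exact (((hasDerivAt_const z (1:ℝ)).add
      ((hasDerivAt_const z ε).mul (hasDerivAt_rho z))).pow 2).congr_deriv (by simp only [Pi.add_apply, Pi.mul_apply]; ring)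
  have h := (hasDerivAt_rho' z).div hden (by positivity)
  have : phi1 ε = fun z => rho' z / (1 + ε * rho z) ^ 2 := rfl
  rw [this]
  refine h.congr_deriv ?_
  unfold phi2
  field_simp
  ring
section Bounds
variable {ε z : ℝ}

lemma rho'_nonneg (hz : 0 ≤ z) : 0 ≤ rho' z := by
  unfold rho'
  have h1 : max (1 - z) 0 ≤ 1 := max_le (by linarith) zero_le_one
  have h0 : 0 ≤ max (1 - z) 0 := le_max_right _ _
  nlinarith

lemma rho'_le_one (hz : 0 ≤ z) : rho' z ≤ 1 := by
  unfold rho'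
  nlinarith [sq_nonneg (max (1 - z) 0)]

lemma rho'_le_two_mul (hz : 0 ≤ z) : rho' z ≤ 2 * z := by
  unfold rho'
  rcases le_or_gt z 1 with h | h
  · rw [max_eq_left (by linarith)]; nlinarith
  · rw [max_eq_right (by linarith)]; nlinarith

lemma rho''_nonneg : 0 ≤ rho'' z := by
  unfold rho''
  positivity

lemma rho''_le_two (hz : 0 ≤ z) : rho'' z ≤ 2 := by
  unfold rho''
  have h1 : max (1 - z) 0 ≤ 1 := max_le (by linarith) zero_le_one
  linarith

lemma rho'_sq_le (hz : 0 ≤ z) : rho' z ^ 2 ≤ 4 * rho z := by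
  unfold rho' rho
  rcases lt_or_ge z 1 with h | h
  · rw [max_eq_left (by linarith), if_pos h]
    nlinarith [sq_nonneg z, sq_nonneg (1 - z), mul_nonneg hz hz,
      mul_nonneg (mul_nonneg hz hz) hz]
  · rw [max_eq_right (by linarith), if_neg (not_lt.2 h)]
    nlinarith

lemma one_le_denom (hε : 0 ≤ ε) (z : ℝ) : 1 ≤ 1 + ε * rho z := by
  nlinarith [mul_nonneg hε (rho_nonneg z)]

lemma phi1_nonneg (hε : 0 ≤ ε) (hz : 0 ≤ z) : 0 ≤ phi1 ε z := by
  unfold phi1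
  have hd := denom_pos hε z
  exact div_nonneg (rho'_nonneg hz) (by positivity)

lemma phi1_le_one (hε : 0 ≤ ε) (hz : 0 ≤ z) : phi1 ε z ≤ 1 := by
  unfold phi1
  have h1 : 1 ≤ (1 + ε * rho z) ^ 2 := one_le_pow₀ (one_le_denom hε z)
  exact le_trans (div_le_self (rho'_nonneg hz) h1) (rho'_le_one hz)

lemma phi1_le_two_mul (hε : 0 ≤ ε) (hz : 0 ≤ z) : phi1 ε z ≤ 2 * z := by
  unfold phi1
  have h1 : 1 ≤ (1 + ε * rho z) ^ 2 := one_le_pow₀ (one_le_denom hε z)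
  exact le_trans (div_le_self (rho'_nonneg hz) h1) (rho'_le_two_mul hz)

lemma abs_phi2_le (hε : 0 ≤ ε) (hz : 0 ≤ z) : |phi2 ε z| ≤ 10 := by
  unfold phi2
  have hd := denom_pos hε z
  set d := 1 + ε * rho z with hdd
  have hd1 : 1 ≤ d := one_le_denom hε z
  have h2 : 1 ≤ d ^ 2 := one_le_pow₀ hd1
  have h3 : 1 ≤ d ^ 3 := one_le_pow₀ hd1
  have key : ε * rho' z ^ 2 ≤ 4 * (d - 1) := by
    have := mul_le_mul_of_nonneg_left (rho'_sq_le hz) hε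
    nlinarith
  have hub : rho'' z / d ^ 2 ≤ 2 :=
    le_trans (div_le_self rho''_nonneg h2) (rho''_le_two hz)
  have hc2 : 0 ≤ 2 * ε * rho' z ^ 2 / d ^ 3 := by
    have := sq_nonneg (rho' z)
    positivity
  have hc2' : 2 * ε * rho' z ^ 2 / d ^ 3 ≤ 8 := by
    rw [div_le_iff₀ (by positivity)]
    nlinarith
  have h0 : 0 ≤ rho'' z / d ^ 2 := div_nonneg rho''_nonneg (by positivity)
  rw [abs_le]
  constructor <;> nlinarith

end Bounds
noncomputable def fweight (ε : ℝ) (x : EuclideanSpace ℝ (Fin 3)) : ℝ :=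
  rho ‖x‖ / (1 + ε * rho ‖x‖)

section Espace

local notation "E" => EuclideanSpace ℝ (Fin 3)

noncomputable def T : E →L[ℝ] E →L[ℝ] ℝ := innerSL ℝ

lemma normT_apply (x : E) : ‖T x‖ = ‖x‖ := innerSL_apply_norm ℝ x

lemma normT_le : ‖T‖ ≤ 1 := by
  apply ContinuousLinearMap.opNorm_le_bound _ zero_le_one
  intro y; rw [normT_apply, one_mul]

noncomputable def F1 (ε : ℝ) (y : E) : E →L[ℝ] ℝ := (phi1 ε ‖y‖ * ‖y‖⁻¹) • T y

lemma F1_zero (ε : ℝ) : F1 ε 0 = 0 := by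
  simp [F1, T]

lemma rho_zero : rho 0 = 0 := by norm_num [rho]
lemma rho'_zero : rho' 0 = 0 := by norm_num [rho']
lemma rho''_zero : rho'' 0 = 2 := by norm_num [rho'']
lemma phi_zero (ε : ℝ) : phi ε 0 = 0 := by simp [phi, rho_zero]
lemma phi1_zero (ε : ℝ) : phi1 ε 0 = 0 := by simp [phi1, rho'_zero]
lemma phi2_zero (ε : ℝ) : phi2 ε 0 = 2 := by
  simp [phi2, rho_zero, rho'_zero, rho''_zero]

lemma fweight_eq (ε : ℝ) : fweight ε = (phi ε) ∘ (fun y : E => ‖y‖) := rfl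

lemma hasFDerivAt_norm' {x : E} (hx : x ≠ 0) :
    HasFDerivAt (fun y : E => ‖y‖) (‖x‖⁻¹ • T x) x := by
  have hr : (0:ℝ) < ‖x‖ := norm_pos_iff.2 hx
  have h2 : HasFDerivAt (fun y : E => ‖y‖ ^ 2) (2 • innerSL ℝ x) x :=
    (hasStrictFDerivAt_norm_sq x).hasFDerivAt
  have hs : HasDerivAt Real.sqrt (1 / (2 * Real.sqrt (‖x‖ ^ 2))) (‖x‖ ^ 2) :=
    Real.hasDerivAt_sqrt (by positivity)
  have h3 := hs.comp_hasFDerivAt x h2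
  have heq : (Real.sqrt ∘ fun y : E => ‖y‖ ^ 2) = fun y : E => ‖y‖ :=
    funext fun y => by simp [Real.sqrt_sq (norm_nonneg y)]
  rw [heq] at h3
  refine h3.congr_fderiv (Eq.symm ?_)
  rw [Real.sqrt_sq hr.le]
  ext y
  simp only [ContinuousLinearMap.smul_apply, smul_eq_mul, T, two_smul,
    ContinuousLinearMap.add_apply]
  generalize ((innerSL ℝ) x) y = A
  field_simp
  ring

lemma slope_bound {g : ℝ → ℝ} {a : ℝ} (h : HasDerivAt g a 0) (hg0 : g 0 = 0) {c : ℝ}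
    (hc : 0 < c) : ∃ δ > 0, ∀ z : ℝ, 0 < z → z < δ → |g z - a * z| ≤ c * z := by
  have h1 := (hasDerivAt_iff_isLittleO.1 h).def hc
  rw [Metric.eventually_nhds_iff] at h1
  obtain ⟨δ, hδ, hb⟩ := h1
  refine ⟨δ, hδ, fun z hz hzδ => ?_⟩
  have := hb (y := z) (by simpa [Real.dist_eq, abs_of_pos hz] using hzδ)
  simpa [hg0, Real.norm_eq_abs, abs_of_pos hz, mul_comm a z] using this

lemma hasFDerivAt_fweight {ε : ℝ} (hε : 0 ≤ ε) (x : E) :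
    HasFDerivAt (fweight ε) (F1 ε x) x := by
  by_cases hx : x = 0
  · subst hx
    rw [F1_zero]
    rw [hasFDerivAt_iff_isLittleO_nhds_zero]
    rw [Asymptotics.isLittleO_iff]
    intro c hc
    obtain ⟨δ, hδ, hb⟩ := slope_bound (by
        simpa [phi1_zero] using hasDerivAt_phi hε 0) (phi_zero ε) hc
    rw [Metric.eventually_nhds_iff]
    refine ⟨δ, hδ, fun y hy => ?_⟩
    by_cases hy0 : y = 0
    · simp [hy0, fweight, rho_zero]
    · have hr : (0:ℝ) < ‖y‖ := norm_pos_iff.2 hy0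
      have hyδ : ‖y‖ < δ := by simpa [dist_eq_norm] using hy
      have := hb ‖y‖ hr hyδ
      have he : fweight ε (0 + y) - fweight ε 0 - (0 : E →L[ℝ] ℝ) y = phi ε ‖y‖ := by
        simp [fweight, rho_zero, phi]
      rw [he]
      simpa [Real.norm_eq_abs] using this
  · have hr : (0:ℝ) < ‖x‖ := norm_pos_iff.2 hx
    have h := (hasDerivAt_phi hε ‖x‖).comp_hasFDerivAt x (hasFDerivAt_norm' hx)
    rw [fweight_eq]
    have : F1 ε x = phi1 ε ‖x‖ • (‖x‖⁻¹ • T x) := by rw [smul_smul]; rfl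
    rw [this]
    exact h

lemma hasFDerivAt_F1_ne {ε : ℝ} (hε : 0 ≤ ε) {x : E} (hx : x ≠ 0) :
    HasFDerivAt (F1 ε)
      ((phi1 ε ‖x‖ * ‖x‖⁻¹) • T +
        (((phi2 ε ‖x‖ * ‖x‖⁻¹ + phi1 ε ‖x‖ * -(‖x‖ ^ 2)⁻¹) • (‖x‖⁻¹ • T x)).smulRight (T x))) x := by
  have hr : (0:ℝ) < ‖x‖ := norm_pos_iff.2 hx
  have hq : HasDerivAt (fun z : ℝ => phi1 ε z * z⁻¹)
      (phi2 ε ‖x‖ * ‖x‖⁻¹ + phi1 ε ‖x‖ * -(‖x‖ ^ 2)⁻¹) ‖x‖ :=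
    (hasDerivAt_phi1 hε ‖x‖).mul (hasDerivAt_inv hr.ne')
  have hs := hq.comp_hasFDerivAt x (hasFDerivAt_norm' hx)
  have hT : HasFDerivAt (fun y : E => T y) T x := T.hasFDerivAt
  exact hs.smul hT

lemma hasFDerivAt_F1_zero {ε : ℝ} (hε : 0 ≤ ε) :
    HasFDerivAt (F1 ε) ((2:ℝ) • T) 0 := by
  rw [hasFDerivAt_iff_isLittleO_nhds_zero, Asymptotics.isLittleO_iff]
  intro c hc
  obtain ⟨δ, hδ, hb⟩ := slope_bound (by
      simpa [phi2_zero] using hasDerivAt_phi1 hε 0) (phi1_zero ε) hc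
  rw [Metric.eventually_nhds_iff]
  refine ⟨δ, hδ, fun y hy => ?_⟩
  by_cases hy0 : y = 0
  · simp [hy0, F1_zero]
  · have hr : (0:ℝ) < ‖y‖ := norm_pos_iff.2 hy0
    have hyδ : ‖y‖ < δ := by simpa [dist_eq_norm] using hy
    have hbb := hb ‖y‖ hr hyδ
    have he : F1 ε (0 + y) - F1 ε 0 - ((2:ℝ) • T) y
        = (phi1 ε ‖y‖ * ‖y‖⁻¹ - 2) • T y := by
      rw [zero_add, F1_zero, sub_zero, F1]
      rw [ContinuousLinearMap.smul_apply]
      exact (sub_smul _ _ _).symm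
    rw [he]
    have hns : ‖(phi1 ε ‖y‖ * ‖y‖⁻¹ - 2) • T y‖ = ‖phi1 ε ‖y‖ * ‖y‖⁻¹ - 2‖ * ‖T y‖ :=
      norm_smul (phi1 ε ‖y‖ * ‖y‖⁻¹ - 2) (T y)
    rw [hns, normT_apply, Real.norm_eq_abs]
    have habs : |phi1 ε ‖y‖ * ‖y‖⁻¹ - 2| ≤ c := by
      have hq : phi1 ε ‖y‖ * ‖y‖⁻¹ - 2 = (phi1 ε ‖y‖ - 2 * ‖y‖) / ‖y‖ := by
        field_simp
      rw [hq, abs_div, abs_of_pos hr, div_le_iff₀ hr]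
      linarith [hbb]
    exact mul_le_mul_of_nonneg_right habs (norm_nonneg y)

end Espace
set_option maxHeartbeats 1000000 in
theorem fweight_hessian_bounded :
    ∃ C : ℝ, ∀ ε : ℝ, 0 < ε → ∀ x : EuclideanSpace ℝ (Fin 3),
      ‖iteratedFDeriv ℝ 2 (fweight ε) x‖ ≤ C := by
  refine ⟨100, fun ε hε x => ?_⟩
  have hε' : 0 ≤ ε := hε.le
  have hf1 : fderiv ℝ (fweight ε) = F1 ε := funext fun y => (hasFDerivAt_fweight hε' y).fderiv
  have key : ‖iteratedFDeriv ℝ 2 (fweight ε) x‖ = ‖fderiv ℝ (fderiv ℝ (fweight ε)) x‖ := by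
    rw [← norm_iteratedFDeriv_fderiv (n := 1), ← norm_iteratedFDeriv_fderiv (n := 0),
      norm_iteratedFDeriv_zero]
  rw [key, hf1]
  by_cases hx : x = 0
  · subst hx
    rw [(hasFDerivAt_F1_zero hε').fderiv]
    have h1 : ‖(2:ℝ) • T‖ ≤ ‖(2:ℝ)‖ * ‖T‖ := ContinuousLinearMap.opNorm_smul_le (2:ℝ) T
    have h2 : ‖(2:ℝ)‖ = 2 := by simp
    nlinarith [normT_le, norm_nonneg T]
  · rw [(hasFDerivAt_F1_ne hε' hx).fderiv]
    have hr : (0:ℝ) < ‖x‖ := norm_pos_iff.2 hx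
    set r := ‖x‖ with hrdef
    set a := phi2 ε r * r⁻¹ + phi1 ε r * -(r ^ 2)⁻¹ with hadef
    have hr2 : (0:ℝ) < r ^ 2 := by positivity
    have h10 := abs_phi2_le hε' hr.le
    have h2r := phi1_le_two_mul hε' hr.le
    have h1n := phi1_nonneg hε' hr.le
    have hinv : (0:ℝ) < r⁻¹ := inv_pos.2 hr
    have hA1 : phi1 ε r * r⁻¹ ≤ 2 := by
      have h := mul_le_mul_of_nonneg_right h2r hinv.le
      calc phi1 ε r * r⁻¹ ≤ 2 * r * r⁻¹ := h
        _ = 2 := by field_simp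
    have hA0 : 0 ≤ phi1 ε r * r⁻¹ := mul_nonneg h1n hinv.le
    have hA : ‖(phi1 ε r * r⁻¹) • T‖ ≤ 2 := by
      have h1 : ‖(phi1 ε r * r⁻¹) • T‖ ≤ ‖phi1 ε r * r⁻¹‖ * ‖T‖ :=
        ContinuousLinearMap.opNorm_smul_le (phi1 ε r * r⁻¹) T
      have h1' : ‖phi1 ε r * r⁻¹‖ = phi1 ε r * r⁻¹ := by
        rw [Real.norm_eq_abs, abs_of_nonneg hA0]
      calc ‖(phi1 ε r * r⁻¹) • T‖ ≤ ‖phi1 ε r * r⁻¹‖ * ‖T‖ := h1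
        _ = phi1 ε r * r⁻¹ * ‖T‖ := by rw [h1']
        _ ≤ 2 * 1 := mul_le_mul hA1 normT_le (norm_nonneg T) (by norm_num)
        _ = 2 := by norm_num
    have hB : ‖(a • (r⁻¹ • T x)).smulRight (T x)‖ ≤ 12 := by
      have h1 : ‖(a • (r⁻¹ • T x)).smulRight (T x)‖ = ‖a • (r⁻¹ • T x)‖ * ‖T x‖ :=
        ContinuousLinearMap.norm_smulRight_apply _ _
      have h2 : ‖a • (r⁻¹ • T x)‖ = ‖a‖ * ‖r⁻¹ • T x‖ := norm_smul a (r⁻¹ • T x)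
      have h3 : ‖r⁻¹ • T x‖ = ‖r⁻¹‖ * ‖T x‖ := norm_smul r⁻¹ (T x)
      rw [h1, h2, h3, normT_apply, Real.norm_eq_abs, Real.norm_eq_abs, abs_of_pos hinv]
      have h4 : r⁻¹ * r = 1 := by field_simp
      have h5 : |a| ≤ 12 * r⁻¹ := by
        have h6 : |a| ≤ |phi2 ε r * r⁻¹| + |phi1 ε r * -(r ^ 2)⁻¹| := abs_add_le _ _
        have h7 : |phi2 ε r * r⁻¹| = |phi2 ε r| * r⁻¹ := by
          rw [abs_mul, abs_of_pos hinv]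
        have h8 : |phi1 ε r * -(r ^ 2)⁻¹| = phi1 ε r * (r ^ 2)⁻¹ := by
          rw [abs_mul, abs_neg, abs_of_pos (inv_pos.2 hr2), abs_of_nonneg h1n]
        have h9 : phi1 ε r * (r ^ 2)⁻¹ ≤ 2 * r⁻¹ := by
          have := mul_le_mul_of_nonneg_right h2r (inv_pos.2 hr2).le
          calc phi1 ε r * (r ^ 2)⁻¹ ≤ 2 * r * (r ^ 2)⁻¹ := this
            _ = 2 * r⁻¹ := by field_simp
        have h11 : |phi2 ε r| * r⁻¹ ≤ 10 * r⁻¹ :=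
          mul_le_mul_of_nonneg_right h10 hinv.le
        calc |a| ≤ |phi2 ε r| * r⁻¹ + phi1 ε r * (r ^ 2)⁻¹ := by rw [← h7, ← h8]; exact h6
          _ ≤ 10 * r⁻¹ + 2 * r⁻¹ := add_le_add h11 h9
          _ = 12 * r⁻¹ := by ring
      calc |a| * (r⁻¹ * r) * r = |a| * r := by rw [h4]; ring
        _ ≤ 12 * r⁻¹ * r := mul_le_mul_of_nonneg_right h5 hr.le
        _ = 12 := by field_simp
    calc ‖(phi1 ε r * r⁻¹) • T + (a • (r⁻¹ • T x)).smulRight (T x)‖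
        ≤ ‖(phi1 ε r * r⁻¹) • T‖ + ‖(a • (r⁻¹ • T x)).smulRight (T x)‖ := ContinuousLinearMap.opNorm_add_le _ _
      _ ≤ 2 + 12 := add_le_add hA hB
      _ ≤ 100 := by norm_num
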